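/- arXiv:2007.14569 — 2 statements merged into one kernel-verified Lean document; each statement's English description precedes it below -/
import Mathlib

section
/- With the same setup (f four-wise independent mapping U to {±1}, Y(S) = Σ_{s∈S} f(s), d = |A △ B|), the estimator D = (Y(A) − Y(B))^2 satisfies E[D^2] = 3d^2 − 2d, hence Var[D] = 2d^2 − 2d. -/
open MeasureTheory ProbabilityTheory

/-- Second moment and variance of the Tug-of-War estimator.  With
`F` drawn from a four-wise independent `±1`-valued hash family,
`Y(S)(ω) = Σ_{s∈S} F s ω`, `d = |A △ B|`, and `D = (Y(A) - Y(B))^2`, we have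
`E[D^2] = 3d^2 - 2d` and `Var[D] = 2d^2 - 2d`. -/
theorem stmt6 {U : Type*} [DecidableEq U] {Ω : Type*} [MeasurableSpace Ω]
    (μ : Measure Ω) [IsProbabilityMeasure μ]
    (F : U → Ω → ℝ)
    (hmeas : ∀ s, Measurable (F s))
    (hval : ∀ s ω, F s ω = 1 ∨ F s ω = -1)
    (hindep : ∀ T : Finset U, T.card ≤ 4 →
      iIndepFun (fun s : T => F s) μ)
    (hunif : ∀ s, μ {ω | F s ω = 1} = 1 / 2)
    (A B : Finset U) (d : ℝ) (hd : d = ((symmDiff A B).card : ℝ)) :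
    (∫ ω, ((∑ s ∈ A, F s ω - ∑ s ∈ B, F s ω) ^ 2) ^ 2 ∂μ
        = 3 * d ^ 2 - 2 * d) ∧
    variance (fun ω => (∑ s ∈ A, F s ω - ∑ s ∈ B, F s ω) ^ 2) μ
        = 2 * d ^ 2 - 2 * d := by
  classical
  set S : Finset U := symmDiff A B with hS
  set ε : U → ℝ := fun s => if s ∈ A then 1 else -1 with hε
  set X : U → Ω → ℝ := fun s ω => ε s * F s ω with hX
  have hXval : ∀ s ω, X s ω = 1 ∨ X s ω = -1 := by
    intro s ω
    rcases hval s ω with h | h <;> by_cases hs : s ∈ A <;> simp [hX, hε, h, hs]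
  have hXsq : ∀ s ω, X s ω * X s ω = 1 := by
    intro s ω; rcases hXval s ω with h | h <;> rw [h] <;> norm_num
  have hXmeas : ∀ s, Measurable (X s) := fun s => (hmeas s).const_mul _
  -- boundedness ⇒ integrability
  have hInt : ∀ (g : Ω → ℝ), Measurable g → (∀ ω, g ω = 1 ∨ g ω = -1) →
      Integrable g μ := by
    intro g hg hv
    refine Integrable.mono' (integrable_const 1) hg.aestronglyMeasurable
      (ae_of_all _ fun ω => ?_)
    rcases hv ω with h | h <;> simp [h]
  have hmul : ∀ {a b : ℝ}, (a = 1 ∨ a = -1) → (b = 1 ∨ b = -1) →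
      (a * b = 1 ∨ a * b = -1) := by
    rintro a b (rfl | rfl) (rfl | rfl) <;> norm_num
  -- mean zero
  have hEF : ∀ s, ∫ ω, F s ω ∂μ = 0 := by
    intro s
    have hsetm : MeasurableSet {ω | F s ω = 1} := by
      have h : {ω | F s ω = 1} = F s ⁻¹' {1} := by ext ω; simp
      rw [h]; exact hmeas s (measurableSet_singleton 1)
    have hrw : F s = fun ω => 2 * ({ω | F s ω = 1}.indicator (fun _ => (1:ℝ)) ω) - 1 := by
      funext ω
      rcases hval s ω with h | h <;> simp [Set.indicator, h] <;> norm_num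
    rw [hrw]
    have hii : Integrable ({ω | F s ω = 1}.indicator (fun _ => (1:ℝ))) μ :=
      (integrable_const 1).indicator hsetm
    rw [integral_sub (hii.const_mul 2) (integrable_const 1), integral_const_mul,
      integral_indicator_const (1:ℝ) hsetm, integral_const, measureReal_def, hunif s]
    norm_num [measure_univ, ENNReal.toReal_div]
  -- pairwise
  have hpair : ∀ s t : U, s ≠ t → ∫ ω, F s ω * F t ω ∂μ = 0 := by
    intro s t hst
    have hcard : ({s, t} : Finset U).card ≤ 4 :=
      le_trans (Finset.card_insert_le _ _) (by simp)
    have h := hindep {s, t} hcard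
    have hij : (⟨s, by simp⟩ : ({s, t} : Finset U)) ≠ ⟨t, by simp⟩ := by
      simp [Subtype.ext_iff, hst]
    have hind : IndepFun (F s) (F t) μ := h.indepFun hij
    rw [hind.integral_fun_mul_eq_mul_integral (hmeas s).aestronglyMeasurable (hmeas t).aestronglyMeasurable,
      hEF s, zero_mul]
  -- four distinct
  have hquad : ∀ s t u v : U, s ≠ t → s ≠ u → s ≠ v → t ≠ u → t ≠ v → u ≠ v →
      ∫ ω, (F s ω * F t ω) * (F u ω * F v ω) ∂μ = 0 := by
    intro s t u v hst hsu hsv htu htv huv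
    have hcard : ({s, t, u, v} : Finset U).card ≤ 4 := by
      have c4 := Finset.card_insert_le s ({t, u, v} : Finset U)
      have c3 := Finset.card_insert_le t ({u, v} : Finset U)
      have c2 := Finset.card_insert_le u ({v} : Finset U)
      simp only [Finset.card_singleton] at *
      omega
    have h := hindep {s, t, u, v} hcard
    set J : Finset ({s, t, u, v} : Finset U) := {⟨t, by simp⟩, ⟨u, by simp⟩, ⟨v, by simp⟩}
      with hJ
    have hiJ : (⟨s, by simp⟩ : ({s, t, u, v} : Finset U)) ∉ J := by
      simp [hJ, Subtype.ext_iff, hst, hsu, hsv]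
    have hind : IndepFun (∏ j ∈ J, F (j : U)) (F s) μ :=
      h.indepFun_finsetProd_of_notMem (fun i => hmeas i) hiJ
    have hJprod : ∀ ω, (∏ j ∈ J, F (j : U)) ω = F t ω * (F u ω * F v ω) := by
      intro ω
      rw [Finset.prod_apply, hJ,
        Finset.prod_insert (by simp [Subtype.ext_iff, htu, htv]),
        Finset.prod_insert (by simp [Subtype.ext_iff, huv]), Finset.prod_singleton]
    have hrw : (fun ω => (F s ω * F t ω) * (F u ω * F v ω))
        = fun ω => (∏ j ∈ J, F (j : U)) ω * F s ω := by
      funext ω; rw [hJprod ω]; ring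
    have hmp : Measurable (∏ j ∈ J, F (j : U)) := by
      have hpe : (∏ j ∈ J, F (j : U)) = fun a => ∏ j ∈ J, F (j : U) a :=
        funext fun a => by simp
      rw [hpe]; exact Finset.measurable_prod J fun j _ => hmeas _
    rw [hrw,
      hind.integral_fun_mul_eq_mul_integral hmp.aestronglyMeasurable
        (hmeas s).aestronglyMeasurable, hEF s, mul_zero]
  -- X versions
  have hXpair : ∀ s t : U, s ≠ t → ∫ ω, X s ω * X t ω ∂μ = 0 := by
    intro s t hst
    have h : (fun ω => X s ω * X t ω) = fun ω => (ε s * ε t) * (F s ω * F t ω) := by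
      funext ω; simp only [hX]; ring
    rw [h, integral_const_mul, hpair s t hst, mul_zero]
  have hXquad : ∀ s t u v : U, s ≠ t → s ≠ u → s ≠ v → t ≠ u → t ≠ v → u ≠ v →
      ∫ ω, (X s ω * X t ω) * (X u ω * X v ω) ∂μ = 0 := by
    intro s t u v hst hsu hsv htu htv huv
    have h : (fun ω => (X s ω * X t ω) * (X u ω * X v ω))
        = fun ω => (ε s * ε t * ε u * ε v) * ((F s ω * F t ω) * (F u ω * F v ω)) := by
      funext ω; simp only [hX]; ring
    rw [h, integral_const_mul, hquad s t u v hst hsu hsv htu htv huv, mul_zero]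
  -- the sum decomposition
  set G : Ω → ℝ := fun ω => ∑ s ∈ S, X s ω with hG
  have hsum : ∀ ω, ∑ s ∈ A, F s ω - ∑ s ∈ B, F s ω = G ω := by
    intro ω
    have hsd : S = (A \ B) ∪ (B \ A) := by
      rw [hS]; ext x; simp [Finset.mem_symmDiff]
    have hdisj : Disjoint (A \ B) (B \ A) := disjoint_sdiff_sdiff
    show _ = ∑ s ∈ S, X s ω
    rw [hsd, Finset.sum_union hdisj]
    have h1 : ∑ s ∈ A \ B, X s ω = ∑ s ∈ A \ B, F s ω := by
      refine Finset.sum_congr rfl fun s hs => ?_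
      have hsa : s ∈ A := (Finset.mem_sdiff.mp hs).1
      simp [hX, hε, hsa]
    have h2 : ∑ s ∈ B \ A, X s ω = -∑ s ∈ B \ A, F s ω := by
      rw [← Finset.sum_neg_distrib]
      refine Finset.sum_congr rfl fun s hs => ?_
      have hsa : s ∉ A := (Finset.mem_sdiff.mp hs).2
      simp [hX, hε, hsa]
    rw [h1, h2]
    have hA := Finset.sum_inter_add_sum_sdiff A B (fun s => F s ω)
    have hB := Finset.sum_inter_add_sum_sdiff B A (fun s => F s ω)
    rw [Finset.inter_comm] at hB
    linarith
  set P : Ω → ℝ := fun ω => ∑ p ∈ S.offDiag, X p.1 ω * X p.2 ω with hP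
  have hdS : d = (S.card : ℝ) := hd
  have hG2 : ∀ ω, (G ω) ^ 2 = d + P ω := by
    intro ω
    have h1 : (G ω) ^ 2 = ∑ p ∈ S ×ˢ S, X p.1 ω * X p.2 ω := by
      rw [pow_two, hG, Finset.sum_mul_sum, ← Finset.sum_product']
    rw [h1, ← Finset.diag_union_offDiag S,
      Finset.sum_union (Finset.disjoint_diag_offDiag S), Finset.sum_diag]
    congr 1
    rw [Finset.sum_congr rfl (fun i _ => hXsq i ω), Finset.sum_const, nsmul_eq_mul,
      mul_one, hdS]
  -- integrability pieces
  have hInt2 : ∀ s t : U, Integrable (fun ω => X s ω * X t ω) μ := fun s t =>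
    hInt _ ((hXmeas s).mul (hXmeas t)) (fun ω => hmul (hXval s ω) (hXval t ω))
  have hInt4 : ∀ p q : U × U,
      Integrable (fun ω => (X p.1 ω * X p.2 ω) * (X q.1 ω * X q.2 ω)) μ := fun p q =>
    hInt _ (((hXmeas p.1).mul (hXmeas p.2)).mul ((hXmeas q.1).mul (hXmeas q.2)))
      (fun ω => hmul (hmul (hXval p.1 ω) (hXval p.2 ω)) (hmul (hXval q.1 ω) (hXval q.2 ω)))
  have hPint_i : Integrable P μ := by
    rw [hP]; exact integrable_finset_sum _ fun p _ => hInt2 p.1 p.2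
  have hPint : ∫ ω, P ω ∂μ = 0 := by
    rw [hP, integral_finset_sum _ fun p _ => hInt2 p.1 p.2]
    refine Finset.sum_eq_zero fun p hp => ?_
    exact hXpair p.1 p.2 (Finset.mem_offDiag.mp hp).2.2
  -- second moment of G
  have hEG2 : ∫ ω, (G ω) ^ 2 ∂μ = d := by
    have h : (fun ω => (G ω) ^ 2) = fun ω => d + P ω := funext hG2
    rw [h, integral_add (integrable_const d) hPint_i, integral_const, hPint]
    simp
  -- the key quadruple integral
  have hI : ∀ p ∈ S.offDiag, ∀ q ∈ S.offDiag,
      ∫ ω, (X p.1 ω * X p.2 ω) * (X q.1 ω * X q.2 ω) ∂μ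
        = if q = p ∨ q = p.swap then 1 else 0 := by
    rintro ⟨p1, p2⟩ hp ⟨q1, q2⟩ hq
    obtain ⟨-, -, hp12⟩ := Finset.mem_offDiag.mp hp
    obtain ⟨-, -, hq12⟩ := Finset.mem_offDiag.mp hq
    by_cases h1 : ((q1, q2) : U × U) = (p1, p2)
    · injection h1 with hq1 hq2
      subst hq1; subst hq2
      have h : (fun ω => (X q1 ω * X q2 ω) * (X q1 ω * X q2 ω)) = fun _ => (1:ℝ) := by
        funext ω
        have e1 := hXsq q1 ω; have e2 := hXsq q2 ω
        calc (X q1 ω * X q2 ω) * (X q1 ω * X q2 ω)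
            = (X q1 ω * X q1 ω) * (X q2 ω * X q2 ω) := by ring
          _ = 1 := by rw [e1, e2, mul_one]
      rw [h]; simp
    by_cases h2 : ((q1, q2) : U × U) = (p1, p2).swap
    · rw [Prod.swap_prod_mk] at h2
      injection h2 with hq1 hq2
      subst hq1; subst hq2
      have h : (fun ω => (X q2 ω * X q1 ω) * (X q1 ω * X q2 ω)) = fun _ => (1:ℝ) := by
        funext ω
        have e1 := hXsq q1 ω; have e2 := hXsq q2 ω
        calc (X q2 ω * X q1 ω) * (X q1 ω * X q2 ω)
            = (X q1 ω * X q1 ω) * (X q2 ω * X q2 ω) := by ring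
          _ = 1 := by rw [e1, e2, mul_one]
      rw [h]; simp [Prod.swap_prod_mk]
    rw [if_neg (not_or.mpr ⟨h1, h2⟩)]
    have hne1 : ¬(q1 = p1 ∧ q2 = p2) := by
      intro hab
      exact h1 (by rw [hab.1, hab.2])
    have hne2 : ¬(q1 = p2 ∧ q2 = p1) := by
      intro hab
      exact h2 (by rw [Prod.swap_prod_mk, hab.1, hab.2])
    by_cases e11 : q1 = p1
    · subst e11
      have hqp2 : q2 ≠ p2 := fun h => hne1 ⟨rfl, h⟩
      have h : (fun ω => (X q1 ω * X p2 ω) * (X q1 ω * X q2 ω))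
          = fun ω => X p2 ω * X q2 ω := by
        funext ω
        have e := hXsq q1 ω
        calc (X q1 ω * X p2 ω) * (X q1 ω * X q2 ω)
            = (X q1 ω * X q1 ω) * (X p2 ω * X q2 ω) := by ring
          _ = X p2 ω * X q2 ω := by rw [e, one_mul]
      rw [h]; exact hXpair p2 q2 (Ne.symm hqp2)
    by_cases e12 : q1 = p2
    · subst e12
      have hqp1 : q2 ≠ p1 := fun h => hne2 ⟨rfl, h⟩
      have h : (fun ω => (X p1 ω * X q1 ω) * (X q1 ω * X q2 ω))
          = fun ω => X p1 ω * X q2 ω := by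
        funext ω
        have e := hXsq q1 ω
        calc (X p1 ω * X q1 ω) * (X q1 ω * X q2 ω)
            = (X q1 ω * X q1 ω) * (X p1 ω * X q2 ω) := by ring
          _ = X p1 ω * X q2 ω := by rw [e, one_mul]
      rw [h]; exact hXpair p1 q2 (Ne.symm hqp1)
    by_cases e21 : q2 = p1
    · subst e21
      have h : (fun ω => (X q2 ω * X p2 ω) * (X q1 ω * X q2 ω))
          = fun ω => X p2 ω * X q1 ω := by
        funext ω
        have e := hXsq q2 ω
        calc (X q2 ω * X p2 ω) * (X q1 ω * X q2 ω)
            = (X q2 ω * X q2 ω) * (X p2 ω * X q1 ω) := by ring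
          _ = X p2 ω * X q1 ω := by rw [e, one_mul]
      rw [h]; exact hXpair p2 q1 (fun h' => e12 h'.symm)
    by_cases e22 : q2 = p2
    · subst e22
      have h : (fun ω => (X p1 ω * X q2 ω) * (X q1 ω * X q2 ω))
          = fun ω => X p1 ω * X q1 ω := by
        funext ω
        have e := hXsq q2 ω
        calc (X p1 ω * X q2 ω) * (X q1 ω * X q2 ω)
            = (X q2 ω * X q2 ω) * (X p1 ω * X q1 ω) := by ring
          _ = X p1 ω * X q1 ω := by rw [e, one_mul]
      rw [h]; exact hXpair p1 q1 (fun h' => e11 h'.symm)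
    · exact hXquad p1 p2 q1 q2 hp12 (fun h' => e11 h'.symm) (fun h' => e21 h'.symm)
        (fun h' => e12 h'.symm) (fun h' => e22 h'.symm) hq12
  -- E[P * P] = 2 (d^2 - d)
  have hoffcard : ((S.offDiag.card : ℝ)) = d ^ 2 - d := by
    have hle : S.card ≤ S.card * S.card := by
      rcases Nat.eq_zero_or_pos S.card with h | h
      · simp [h]
      · exact Nat.le_mul_of_pos_left _ h
    rw [Finset.offDiag_card, Nat.cast_sub hle, Nat.cast_mul, hdS]; ring
  have hPPrw : (fun ω => P ω * P ω) = fun ω => ∑ p ∈ S.offDiag, ∑ q ∈ S.offDiag,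
      (X p.1 ω * X p.2 ω) * (X q.1 ω * X q.2 ω) := by
    funext ω; rw [hP]; exact Finset.sum_mul_sum _ _ _ _
  have hPP_i : Integrable (fun ω => P ω * P ω) μ := by
    rw [hPPrw]
    exact integrable_finset_sum _ fun p _ => integrable_finset_sum _ fun q _ => hInt4 p q
  have hPP : ∫ ω, P ω * P ω ∂μ = 2 * (d ^ 2 - d) := by
    rw [hPPrw,
      integral_finset_sum _ fun p _ => integrable_finset_sum _ fun q _ => hInt4 p q]
    have hinner : ∀ p ∈ S.offDiag,
        (∑ q ∈ S.offDiag,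
          ∫ ω, (X p.1 ω * X p.2 ω) * (X q.1 ω * X q.2 ω) ∂μ) = 2 := by
      intro p hp
      rw [Finset.sum_congr rfl fun q hq => hI p hp q hq]
      have hps : p.swap ∈ S.offDiag := by
        obtain ⟨h1, h2, h3⟩ := Finset.mem_offDiag.mp hp
        exact Finset.mem_offDiag.mpr ⟨h2, h1, fun h => h3 h.symm⟩
      have hpps : p ≠ p.swap := by
        obtain ⟨-, -, h3⟩ := Finset.mem_offDiag.mp hp
        intro h'
        exact h3 (congrArg Prod.fst h' |>.trans rfl)
      have hsplit : ∀ q : U × U, (if q = p ∨ q = p.swap then (1:ℝ) else 0)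
          = (if q = p then 1 else 0) + (if q = p.swap then 1 else 0) := by
        intro q
        by_cases a : q = p
        · subst a; simp [hpps]
        · simp [a]
      rw [Finset.sum_congr rfl fun q _ => hsplit q, Finset.sum_add_distrib,
        Finset.sum_ite_eq' S.offDiag p (fun _ => (1:ℝ)),
        Finset.sum_ite_eq' S.offDiag p.swap (fun _ => (1:ℝ)), if_pos hp, if_pos hps]
      norm_num
    have houter : ∀ p ∈ S.offDiag,
        (∫ ω, (∑ q ∈ S.offDiag, (X p.1 ω * X p.2 ω) * (X q.1 ω * X q.2 ω)) ∂μ) = 2 := by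
      intro p hp
      rw [integral_finset_sum _ fun q _ => hInt4 p q]
      exact hinner p hp
    rw [Finset.sum_congr rfl houter, Finset.sum_const, nsmul_eq_mul, hoffcard]
    ring
  -- fourth moment of G
  have hEG4 : ∫ ω, ((G ω) ^ 2) ^ 2 ∂μ = 3 * d ^ 2 - 2 * d := by
    have hid : (fun ω => ((G ω) ^ 2) ^ 2)
        = fun ω => d ^ 2 + ((2 * d) * P ω + P ω * P ω) := by
      funext ω; rw [hG2 ω]; ring
    have i2 : Integrable (fun ω => (2 * d) * P ω) μ := hPint_i.const_mul _
    have i1 : Integrable (fun ω => (2 * d) * P ω + P ω * P ω) μ := i2.add hPP_i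
    rw [hid, integral_add (integrable_const _) i1, integral_add i2 hPP_i,
      integral_const, integral_const_mul, hPint, hPP]
    simp only [measure_univ, probReal_univ, ENNReal.toReal_one, one_smul, mul_zero, zero_add]
    ring
  -- conclusion
  have hfun4 : (fun ω => ((∑ s ∈ A, F s ω - ∑ s ∈ B, F s ω) ^ 2) ^ 2)
      = fun ω => ((G ω) ^ 2) ^ 2 := funext fun ω => by rw [hsum ω]
  have hfun2 : (fun ω => (∑ s ∈ A, F s ω - ∑ s ∈ B, F s ω) ^ 2)
      = fun ω => (G ω) ^ 2 := funext fun ω => by rw [hsum ω]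
  constructor
  · rw [hfun4]; exact hEG4
  · rw [hfun2]
    have hGmeas : Measurable G := by
      rw [hG]; exact Finset.measurable_sum S fun s _ => hXmeas s
    have hbound : ∀ ω, ‖(G ω) ^ 2‖ ≤ ((S.card : ℝ)) ^ 2 := by
      intro ω
      have habs : |G ω| ≤ (S.card : ℝ) := by
        rw [hG]
        calc |∑ s ∈ S, X s ω| ≤ ∑ s ∈ S, |X s ω| := Finset.abs_sum_le_sum_abs _ _
          _ = ∑ s ∈ S, 1 := Finset.sum_congr rfl fun s _ => by
              rcases hXval s ω with h | h <;> rw [h] <;> norm_num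
          _ = (S.card : ℝ) := by simp
      have : ‖(G ω) ^ 2‖ = |G ω| ^ 2 := by
        rw [Real.norm_eq_abs, abs_pow, sq_abs, ← sq_abs]
      rw [this]
      exact pow_le_pow_left₀ (abs_nonneg _) habs 2
    have hmem : MemLp (fun ω => (G ω) ^ 2) 2 μ :=
      MemLp.of_bound ((hGmeas.pow_const 2).aestronglyMeasurable) _ (ae_of_all _ hbound)
    rw [variance_eq_sub hmem]
    have hpowrw : (fun ω => (G ω) ^ 2) ^ 2 = fun ω => ((G ω) ^ 2) ^ 2 := by
      funext ω; simp [Pi.pow_apply]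
    have e1 : μ[(fun ω => (G ω) ^ 2) ^ 2] = 3 * d ^ 2 - 2 * d := by
      rw [hpowrw]; exact hEG4
    have e2 : μ[(fun ω => (G ω) ^ 2)] = d := hEG2
    rw [e1, e2]
    ring
end

section
/- Throw i balls one at a time independently and uniformly at random into n bins. Let M̃(i, j, k) be the probability that exactly j balls are 'bad' (lie in bins containing ≥ 2 balls) and these bad balls occupy exactly k bins. Then M̃(i, j, k) = ((i−j+1)/n)·M̃(i−1, j−2, k−1) + (k/n)·M̃(i−1, j−1, k) + (1 − (i−1−j+k)/n)·M̃(i−1, j, k). -/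
/-- The set of "bad" balls of an assignment `f` of balls to bins: balls lying
in a bin containing at least two balls. -/
def badBalls {i n : ℕ} (f : Fin i → Fin n) : Finset (Fin i) :=
  Finset.univ.filter fun b => 2 ≤ (Finset.univ.filter fun b' => f b' = f b).card

/-- The set of "bad" bins: bins occupied by the bad balls. -/
def badBins {i n : ℕ} (f : Fin i → Fin n) : Finset (Fin n) :=
  (badBalls f).image f

/-- `Mtilde n i j k` is the probability that throwing `i` balls independently
and uniformly at random into `n` bins yields exactly `j` bad balls occupying
exactly `k` bad bins. -/
def Mtilde (n i j k : ℕ) : ℚ :=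
  ((Finset.univ.filter fun f : Fin i → Fin n =>
      (badBalls f).card = j ∧ (badBins f).card = k).card : ℚ) / (n ^ i : ℚ)

open Finset

/-- number of balls in bin `v` -/
def occ {m n : ℕ} (g : Fin m → Fin n) (v : Fin n) : ℕ :=
  (Finset.univ.filter fun a => g a = v).card

lemma mem_badBalls {m n : ℕ} {g : Fin m → Fin n} {x : Fin m} :
    x ∈ badBalls g ↔ 2 ≤ occ g (g x) := by
  simp [badBalls, occ]

lemma occ_pos_of_eq {m n : ℕ} {g : Fin m → Fin n} {a : Fin m} {v : Fin n} (h : g a = v) :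
    1 ≤ occ g v := by
  have : a ∈ Finset.univ.filter fun a => g a = v := by simp [h]
  have := Finset.card_pos.mpr ⟨a, this⟩
  simpa [occ] using this

lemma occ_eq_sum {m n : ℕ} (g : Fin m → Fin n) (v : Fin n) :
    occ g v = ∑ a : Fin m, if g a = v then 1 else 0 := by
  rw [occ, Finset.card_filter]

lemma occ_snoc {m n : ℕ} (g : Fin m → Fin n) (b v : Fin n) :
    occ (Fin.snoc g b) v = occ g v + if b = v then 1 else 0 := by
  rw [occ_eq_sum, Fin.sum_univ_castSucc]
  simp [occ_eq_sum]

lemma mem_badBins {m n : ℕ} {g : Fin m → Fin n} {v : Fin n} :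
    v ∈ badBins g ↔ 2 ≤ occ g v := by
  constructor
  · rintro h
    simp only [badBins, Finset.mem_image] at h
    obtain ⟨x, hx, rfl⟩ := h
    exact mem_badBalls.mp hx
  · intro h
    have h1 : 1 ≤ occ g v := le_trans (by norm_num) h
    rw [occ] at h1
    obtain ⟨a, ha⟩ := Finset.card_pos.mp h1
    simp only [Finset.mem_filter, Finset.mem_univ, true_and] at ha
    subst ha
    exact Finset.mem_image_of_mem g (mem_badBalls.mpr h)

lemma mem_badBalls_snoc_castSucc {m n : ℕ} {g : Fin m → Fin n} {b : Fin n} {a : Fin m} :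
    a.castSucc ∈ badBalls (Fin.snoc g b) ↔ a ∈ badBalls g ∨ g a = b := by
  rw [mem_badBalls, mem_badBalls]
  have h1 : (Fin.snoc g b : Fin (m+1) → Fin n) a.castSucc = g a := by simp
  rw [h1, occ_snoc]
  by_cases hb : g a = b
  · rw [hb, if_pos rfl]
    have := occ_pos_of_eq (g := g) (a := a) hb
    constructor
    · intro _; exact Or.inr rfl
    · intro _; omega
  · have : ¬ (b = g a) := fun h => hb h.symm
    simp [this, hb]

lemma mem_badBalls_snoc_last {m n : ℕ} {g : Fin m → Fin n} {b : Fin n} :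
    Fin.last m ∈ badBalls (Fin.snoc g b) ↔ 1 ≤ occ g b := by
  rw [mem_badBalls]
  have h1 : (Fin.snoc g b : Fin (m+1) → Fin n) (Fin.last m) = b := by simp
  rw [h1, occ_snoc, if_pos rfl]
  omega

lemma badBins_snoc {m n : ℕ} (g : Fin m → Fin n) (b : Fin n) :
    badBins (Fin.snoc g b) = if 1 ≤ occ g b then insert b (badBins g) else badBins g := by
  ext v
  rw [mem_badBins, occ_snoc]
  by_cases hv : b = v
  · subst hv
    rw [if_pos rfl]
    split_ifs with h
    · constructor
      · intro _; exact Finset.mem_insert_self b _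
      · intro _; omega
    · rw [mem_badBins]; omega
  · rw [if_neg hv, add_zero]
    split_ifs with h
    · rw [Finset.mem_insert, mem_badBins]
      constructor
      · intro h2; exact Or.inr h2
      · rintro (rfl | h2)
        · exact absurd rfl hv
        · exact h2
    · exact mem_badBins.symm

lemma card_badBalls_snoc {m n : ℕ} (g : Fin m → Fin n) (b : Fin n) :
    (badBalls (Fin.snoc g b)).card =
      (badBalls g).card +
        (if occ g b = 0 then 0 else if occ g b = 1 then 2 else 1) := by
  have hrw : (badBalls (Fin.snoc g b)).card =
      (∑ a : Fin m, if a ∈ badBalls g ∨ g a = b then 1 else 0)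
        + (if 1 ≤ occ g b then 1 else 0) := by
    have h1 : badBalls (Fin.snoc g b)
        = Finset.univ.filter (fun x => x ∈ badBalls (Fin.snoc g b)) := by simp
    rw [h1, Finset.card_filter, Fin.sum_univ_castSucc]
    simp only [mem_badBalls_snoc_castSucc, mem_badBalls_snoc_last]
  have hsum : (∑ a : Fin m, if a ∈ badBalls g ∨ g a = b then 1 else 0)
      = (badBalls g ∪ Finset.univ.filter fun a => g a = b).card := by
    have h2 : badBalls g ∪ Finset.univ.filter (fun a => g a = b)
        = Finset.univ.filter (fun a => a ∈ badBalls g ∨ g a = b) := by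
      ext a; simp
    rw [h2, Finset.card_filter]
  rw [hrw, hsum]
  by_cases h0 : occ g b = 0
  · have hB : Finset.univ.filter (fun a => g a = b) = ∅ := by
      rw [Finset.filter_eq_empty_iff]
      intro a _ hab
      have := occ_pos_of_eq hab
      omega
    rw [hB, Finset.union_empty, if_neg (by omega), if_pos h0]
  · by_cases h1 : occ g b = 1
    · have hdisj : Disjoint (badBalls g) (Finset.univ.filter fun a => g a = b) := by
        rw [Finset.disjoint_left]
        intro a ha hab
        rw [Finset.mem_filter] at hab
        rw [mem_badBalls, hab.2] at ha
        omega
      rw [Finset.card_union_of_disjoint hdisj]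
      have hBc : (Finset.univ.filter fun a => g a = b).card = 1 := h1
      rw [hBc, if_pos (by omega), if_neg h0, if_pos h1]
    · have hsub : (Finset.univ.filter fun a => g a = b) ⊆ badBalls g := by
        intro a ha
        rw [Finset.mem_filter] at ha
        rw [mem_badBalls, ha.2]
        omega
      rw [Finset.union_eq_left.mpr hsub, if_pos (by omega), if_neg h0, if_neg h1]

lemma card_filter_occ_ge_two {m n : ℕ} (g : Fin m → Fin n) :
    (Finset.univ.filter fun v => 2 ≤ occ g v).card = (badBins g).card := by
  congr 1
  ext v
  simp [mem_badBins]

lemma card_filter_occ_eq_one {m n : ℕ} (g : Fin m → Fin n) :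
    (Finset.univ.filter fun v => occ g v = 1).card = m - (badBalls g).card := by
  have hinj : Set.InjOn g (Finset.univ \ badBalls g : Finset (Fin m)) := by
    intro a ha a' ha' hgaa
    simp only [Finset.coe_sdiff, Set.mem_diff, Finset.mem_coe, Finset.coe_univ, Set.mem_univ,
      true_and] at ha ha'
    rw [mem_badBalls] at ha
    have hocc : occ g (g a) = 1 := by
      have := occ_pos_of_eq (g := g) (a := a) rfl
      omega
    have hmem : a ∈ Finset.univ.filter (fun x => g x = g a) := by simp
    have hmem' : a' ∈ Finset.univ.filter (fun x => g x = g a) := by simp [hgaa]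
    have := Finset.card_le_one.mp (le_of_eq hocc) a' hmem' a hmem
    exact this.symm
  have himg : Finset.image g (Finset.univ \ badBalls g)
      = Finset.univ.filter (fun v => occ g v = 1) := by
    ext v
    simp only [Finset.mem_image, Finset.mem_sdiff, Finset.mem_univ, true_and,
      Finset.mem_filter]
    constructor
    · rintro ⟨a, ha, rfl⟩
      rw [mem_badBalls] at ha
      have := occ_pos_of_eq (g := g) (a := a) rfl
      omega
    · intro hv
      have h1 : 1 ≤ occ g v := by omega
      rw [occ] at h1
      obtain ⟨a, ha⟩ := Finset.card_pos.mp h1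
      rw [Finset.mem_filter] at ha
      refine ⟨a, ?_, ha.2⟩
      rw [mem_badBalls, ha.2]
      omega
  rw [← himg, Finset.card_image_of_injOn hinj,
    Finset.card_sdiff_of_subset (Finset.subset_univ _)]
  simp

lemma card_badBalls_le {m n : ℕ} (g : Fin m → Fin n) : (badBalls g).card ≤ m := by
  simpa [badBalls] using Finset.card_le_card (Finset.filter_subset _ (Finset.univ : Finset (Fin m)))

lemma occ_partition {m n : ℕ} (g : Fin m → Fin n) :
    n = (Finset.univ.filter fun v => occ g v = 0).card
        + (Finset.univ.filter fun v => occ g v = 1).card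
        + (Finset.univ.filter fun v => 2 ≤ occ g v).card := by
  have h2 : ∀ v : Fin n, (1 : ℕ) = (if occ g v = 0 then 1 else 0)
      + (if occ g v = 1 then 1 else 0) + (if 2 ≤ occ g v then 1 else 0) := by
    intro v
    split_ifs <;> omega
  have h3 : ∑ v : Fin n, (1 : ℕ)
      = (Finset.univ.filter fun v => occ g v = 0).card
        + (Finset.univ.filter fun v => occ g v = 1).card
        + (Finset.univ.filter fun v => 2 ≤ occ g v).card := by
    rw [Finset.sum_congr rfl (fun v _ => h2 v), Finset.sum_add_distrib,
      Finset.sum_add_distrib, ← Finset.card_filter, ← Finset.card_filter,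
      ← Finset.card_filter]
  rw [← h3]
  simp

lemma card_badBins_snoc {m n : ℕ} (g : Fin m → Fin n) (b : Fin n) :
    (badBins (Fin.snoc g b)).card = (badBins g).card + (if occ g b = 1 then 1 else 0) := by
  rw [badBins_snoc]
  by_cases h0 : occ g b = 0
  · rw [if_neg (by omega), if_neg (by omega), add_zero]
  · by_cases h1 : occ g b = 1
    · rw [if_pos (by omega), if_pos h1, Finset.card_insert_of_notMem, add_comm]
      rw [mem_badBins]
      omega
    · have h2 : 2 ≤ occ g b := by omega
      rw [if_pos (by omega), if_neg h1, add_zero,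
        Finset.insert_eq_self.mpr (mem_badBins.mpr h2)]

lemma bb_inner_sum {m n : ℕ} (g : Fin m → Fin n) (J K : ℕ) :
    (∑ b : Fin n, if (badBalls (Fin.snoc g b)).card = J ∧ (badBins (Fin.snoc g b)).card = K
        then 1 else 0)
      = (Finset.univ.filter fun v => occ g v = 0).card
          * (if (badBalls g).card = J ∧ (badBins g).card = K then 1 else 0)
        + (m - (badBalls g).card)
          * (if (badBalls g).card + 2 = J ∧ (badBins g).card + 1 = K then 1 else 0)
        + (badBins g).card
          * (if (badBalls g).card + 1 = J ∧ (badBins g).card = K then 1 else 0) := by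
  have hpt : ∀ b : Fin n,
      (if (badBalls (Fin.snoc g b)).card = J ∧ (badBins (Fin.snoc g b)).card = K
        then (1:ℕ) else 0)
      = (if occ g b = 0 then 1 else 0)
          * (if (badBalls g).card = J ∧ (badBins g).card = K then 1 else 0)
        + (if occ g b = 1 then 1 else 0)
          * (if (badBalls g).card + 2 = J ∧ (badBins g).card + 1 = K then 1 else 0)
        + (if 2 ≤ occ g b then 1 else 0)
          * (if (badBalls g).card + 1 = J ∧ (badBins g).card = K then 1 else 0) := by
    intro b
    rw [card_badBalls_snoc g b, card_badBins_snoc g b]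
    by_cases h0 : occ g b = 0
    · simp [h0]
    · by_cases h1 : occ g b = 1
      · simp [h0, h1]
      · have h2 : 2 ≤ occ g b := by omega
        simp [h0, h1, h2]
  rw [Finset.sum_congr rfl (fun b _ => hpt b), Finset.sum_add_distrib, Finset.sum_add_distrib,
    ← Finset.sum_mul, ← Finset.sum_mul, ← Finset.sum_mul,
    ← Finset.card_filter, ← Finset.card_filter, ← Finset.card_filter,
    card_filter_occ_eq_one, card_filter_occ_ge_two]

lemma bb_count_succ (n m J K : ℕ) :
    (Finset.univ.filter fun f : Fin (m+1) → Fin n =>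
        (badBalls f).card = J ∧ (badBins f).card = K).card
      = ∑ g : Fin m → Fin n, ∑ b : Fin n,
          (if (badBalls (Fin.snoc g b)).card = J ∧ (badBins (Fin.snoc g b)).card = K
            then 1 else 0) := by
  rw [Finset.card_filter]
  rw [← Fintype.sum_equiv (Fin.snocEquiv (fun _ => Fin n))
    (fun p => if (badBalls (Fin.snoc p.2 p.1 : Fin (m+1) → Fin n)).card = J
        ∧ (badBins (Fin.snoc p.2 p.1 : Fin (m+1) → Fin n)).card = K then 1 else 0)
    (fun f => if (badBalls f).card = J ∧ (badBins f).card = K then 1 else 0)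
    (fun p => rfl)]
  rw [Fintype.sum_prod_type]
  rw [Finset.sum_comm]

lemma bb_sum_ite {m n : ℕ} (P : (Fin m → Fin n) → Prop) [DecidablePred P] (c : ℚ) :
    (∑ g : Fin m → Fin n, if P g then c else 0)
      = c * ((Finset.univ.filter P).card : ℚ) := by
  rw [← Finset.sum_filter, Finset.sum_const, nsmul_eq_mul, mul_comm]

lemma bb_count_eq (n m j k : ℕ) :
    ((Finset.univ.filter fun f : Fin (m+1) → Fin n =>
        (badBalls f).card = j + 2 ∧ (badBins f).card = k + 1).card : ℚ)
      = ((m:ℚ) - j) * ((Finset.univ.filter fun g : Fin m → Fin n =>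
            (badBalls g).card = j ∧ (badBins g).card = k).card : ℚ)
        + ((k:ℚ) + 1) * ((Finset.univ.filter fun g : Fin m → Fin n =>
            (badBalls g).card = j + 1 ∧ (badBins g).card = k + 1).card : ℚ)
        + ((n:ℚ) - m + j - k + 1) * ((Finset.univ.filter fun g : Fin m → Fin n =>
            (badBalls g).card = j + 2 ∧ (badBins g).card = k + 1).card : ℚ) := by
  rw [bb_count_succ]
  rw [Finset.sum_congr rfl (fun g _ => bb_inner_sum g (j+2) (k+1))]
  have key : ∀ g : Fin m → Fin n,
      (((Finset.univ.filter fun v => occ g v = 0).card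
          * (if (badBalls g).card = j+2 ∧ (badBins g).card = k+1 then 1 else 0)
        + (m - (badBalls g).card)
          * (if (badBalls g).card + 2 = j+2 ∧ (badBins g).card + 1 = k+1 then 1 else 0)
        + (badBins g).card
          * (if (badBalls g).card + 1 = j+2 ∧ (badBins g).card = k+1 then 1 else 0) : ℕ) : ℚ)
      = (if (badBalls g).card = j ∧ (badBins g).card = k then ((m:ℚ) - j) else 0)
        + (if (badBalls g).card = j+1 ∧ (badBins g).card = k+1 then ((k:ℚ)+1) else 0)
        + (if (badBalls g).card = j+2 ∧ (badBins g).card = k+1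
            then ((n:ℚ) - m + j - k + 1) else 0) := by
    intro g
    have hle := card_badBalls_le g
    push_cast
    have e1 : (((m - (badBalls g).card : ℕ)) : ℚ)
        * (if (badBalls g).card = j ∧ (badBins g).card = k then (1:ℚ) else 0)
        = (if (badBalls g).card = j ∧ (badBins g).card = k then ((m:ℚ) - j) else 0) := by
      by_cases hP : (badBalls g).card = j ∧ (badBins g).card = k
      · rw [if_pos hP, if_pos hP, mul_one,
          Nat.cast_sub (by omega : (badBalls g).card ≤ m), hP.1]
      · rw [if_neg hP, if_neg hP, mul_zero]
    have e2 : (((badBins g).card : ℕ) : ℚ)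
        * (if (badBalls g).card = j+1 ∧ (badBins g).card = k+1 then (1:ℚ) else 0)
        = (if (badBalls g).card = j+1 ∧ (badBins g).card = k+1 then ((k:ℚ)+1) else 0) := by
      by_cases hP : (badBalls g).card = j+1 ∧ (badBins g).card = k+1
      · rw [if_pos hP, if_pos hP, mul_one, hP.2]
        push_cast
        ring
      · rw [if_neg hP, if_neg hP, mul_zero]
    have e3 : (((Finset.univ.filter fun v => occ g v = 0).card : ℕ) : ℚ)
        * (if (badBalls g).card = j+2 ∧ (badBins g).card = k+1 then (1:ℚ) else 0)
        = (if (badBalls g).card = j+2 ∧ (badBins g).card = k+1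
            then ((n:ℚ) - m + j - k + 1) else 0) := by
      by_cases hP : (badBalls g).card = j+2 ∧ (badBins g).card = k+1
      · rw [if_pos hP, if_pos hP, mul_one]
        have hpart := occ_partition g
        rw [card_filter_occ_eq_one, card_filter_occ_ge_two, hP.1, hP.2] at hpart
        have h4 : (Finset.univ.filter fun v => occ g v = 0).card + m + k + 1 = n + j + 2 := by
          have hjm : j + 2 ≤ m := by omega
          omega
        have h5 := congrArg (fun x : ℕ => (x : ℚ)) h4
        push_cast at h5
        linarith
      · rw [if_neg hP, if_neg hP, mul_zero]
    rw [e1, e2, e3]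
    ring
  rw [Nat.cast_sum]
  rw [Finset.sum_congr rfl (fun g _ => key g)]
  rw [Finset.sum_add_distrib, Finset.sum_add_distrib, bb_sum_ite, bb_sum_ite, bb_sum_ite]

/-- The recurrence relation satisfied by `M̃(i, j, k)`, obtained
by throwing the `i`-th ball "in slow motion". -/
theorem stmt11 (n i j k : ℕ) (hn : 0 < n) (hi : 1 ≤ i) (hj : 2 ≤ j) (hk : 1 ≤ k) :
    Mtilde n i j k
      = ((i : ℚ) - (j : ℚ) + 1) / (n : ℚ) * Mtilde n (i - 1) (j - 2) (k - 1)
        + (k : ℚ) / (n : ℚ) * Mtilde n (i - 1) (j - 1) k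
        + (1 - ((i : ℚ) - 1 - (j : ℚ) + (k : ℚ)) / (n : ℚ)) * Mtilde n (i - 1) j k := by
  obtain ⟨m, rfl⟩ : ∃ m, i = m + 1 := ⟨i - 1, by omega⟩
  obtain ⟨j', rfl⟩ : ∃ j', j = j' + 2 := ⟨j - 2, by omega⟩
  obtain ⟨k', rfl⟩ : ∃ k', k = k' + 1 := ⟨k - 1, by omega⟩
  simp only [Nat.add_sub_cancel]
  have hj1 : j' + 2 - 1 = j' + 1 := by omega
  rw [hj1]
  unfold Mtilde
  rw [bb_count_eq n m j' k']
  have hn' : (n : ℚ) ≠ 0 := Nat.cast_ne_zero.mpr (by omega)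
  have hp : (n : ℚ) ^ m ≠ 0 := pow_ne_zero _ hn'
  rw [pow_succ]
  push_cast
  field_simp
  ring
end
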